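/- For all n ≥ 1, the number of permutations of length n avoiding both 132 and 321 with exactly k peaks equals n if k = 0, equals C(n−1, 2) if k = 1, and equals 0 for all k ≥ 2. -/

import Mathlib

open scoped Classical

/-- The word `π₁π₂⋯π_n` of a permutation of `{1,…,n}`, with values in `{1,…,n}`. -/
def permWord {n : ℕ} (π : Equiv.Perm (Fin n)) : List ℕ :=
  List.ofFn fun i => (π i : ℕ) + 1

/-- The word `l` contains the word `ρ` as a (classical) pattern. -/
def ContainsPat (l ρ : List ℕ) : Prop :=
  ∃ f : Fin ρ.length → Fin l.length, StrictMono f ∧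
    ∀ a b : Fin ρ.length, ρ.get a < ρ.get b ↔ l.get (f a) < l.get (f b)

/-- `l` avoids every pattern in the list `B`. -/
def AvoidsAll (l : List ℕ) (B : List (List ℕ)) : Prop :=
  ∀ ρ ∈ B, ¬ ContainsPat l ρ

/-- Number of ascents of the word `l`. -/
def ascents (l : List ℕ) : ℕ :=
  ((Finset.range (l.length - 1)).filter fun i => l.getD i 0 < l.getD (i + 1) 0).card

/-- Number of descents of the word `l`. -/
def descents (l : List ℕ) : ℕ :=
  ((Finset.range (l.length - 1)).filter fun i => l.getD (i + 1) 0 < l.getD i 0).card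

/-- Number of double ascents of the word `l`. -/
def dascents (l : List ℕ) : ℕ :=
  ((Finset.range (l.length - 2)).filter fun i =>
    l.getD i 0 < l.getD (i + 1) 0 ∧ l.getD (i + 1) 0 < l.getD (i + 2) 0).card

/-- Number of double descents of the word `l`. -/
def ddescents (l : List ℕ) : ℕ :=
  ((Finset.range (l.length - 2)).filter fun i =>
    l.getD (i + 1) 0 < l.getD i 0 ∧ l.getD (i + 2) 0 < l.getD (i + 1) 0).card

/-- Number of peaks of the word `l`. -/
def peaks (l : List ℕ) : ℕ :=
  ((Finset.range (l.length - 2)).filter fun i =>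
    l.getD i 0 < l.getD (i + 1) 0 ∧ l.getD (i + 2) 0 < l.getD (i + 1) 0).card

/-- Number of valleys of the word `l`. -/
def valleys (l : List ℕ) : ℕ :=
  ((Finset.range (l.length - 2)).filter fun i =>
    l.getD (i + 1) 0 < l.getD i 0 ∧ l.getD (i + 1) 0 < l.getD (i + 2) 0).card

/-- `acount n k stat B` is the number of permutations of `{1,…,n}` avoiding all
patterns in `B` whose statistic `stat` equals `k`. -/
noncomputable def acount (n k : ℕ) (stat : List ℕ → ℕ) (B : List (List ℕ)) : ℕ :=
  (Finset.univ.filter fun π : Equiv.Perm (Fin n) =>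
    AvoidsAll (permWord π) B ∧ stat (permWord π) = k).card


namespace Stmt19Aux


def rotL (n t s : ℕ) : Equiv.Perm (Fin n) where
  toFun i := if h : (i : ℕ) < t ∧ t ≤ n then
      ⟨((i : ℕ) + s) % t, lt_of_lt_of_le (Nat.mod_lt _ (by omega)) h.2⟩ else i
  invFun i := if h : (i : ℕ) < t ∧ t ≤ n then
      ⟨((i : ℕ) + (t - s % t)) % t, lt_of_lt_of_le (Nat.mod_lt _ (by omega)) h.2⟩ else i
  left_inv := by
    intro i
    dsimp only
    by_cases h : (i : ℕ) < t ∧ t ≤ n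
    · rw [dif_pos h]
      have h1 : ((i : ℕ) + s) % t < t := Nat.mod_lt _ (by omega)
      rw [dif_pos ⟨h1, h.2⟩]
      apply Fin.ext
      show (((i : ℕ) + s) % t + (t - s % t)) % t = (i : ℕ)
      rw [Nat.mod_add_mod]
      have hs := Nat.div_add_mod s t
      have hm : s % t < t := Nat.mod_lt _ (by omega)
      have he : (i : ℕ) + s + (t - s % t) = (i : ℕ) + (s / t + 1) * t := by
        nlinarith [Nat.sub_add_cancel (le_of_lt hm)]
      rw [he, Nat.add_mul_mod_self_right, Nat.mod_eq_of_lt h.1]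
    · rw [dif_neg h, dif_neg h]
  right_inv := by
    intro i
    dsimp only
    by_cases h : (i : ℕ) < t ∧ t ≤ n
    · rw [dif_pos h]
      have h1 : ((i : ℕ) + (t - s % t)) % t < t := Nat.mod_lt _ (by omega)
      rw [dif_pos ⟨h1, h.2⟩]
      apply Fin.ext
      show (((i : ℕ) + (t - s % t)) % t + s) % t = (i : ℕ)
      rw [Nat.mod_add_mod]
      have hs := Nat.div_add_mod s t
      have hm : s % t < t := Nat.mod_lt _ (by omega)
      have he : (i : ℕ) + (t - s % t) + s = (i : ℕ) + (s / t + 1) * t := by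
        nlinarith [Nat.sub_add_cancel (le_of_lt hm)]
      rw [he, Nat.add_mul_mod_self_right, Nat.mod_eq_of_lt h.1]
    · rw [dif_neg h, dif_neg h]

/-- the word value (1-based) at position `i`, 0 out of range. -/
def pv {n : ℕ} (π : Equiv.Perm (Fin n)) (i : ℕ) : ℕ :=
  if h : i < n then ((π ⟨i, h⟩ : ℕ) + 1) else 0

lemma pv_pos {n : ℕ} (π : Equiv.Perm (Fin n)) {i : ℕ} (h : i < n) : 1 ≤ pv π i := by
  simp [pv, h]

lemma pv_le {n : ℕ} (π : Equiv.Perm (Fin n)) {i : ℕ} (h : i < n) : pv π i ≤ n := by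
  simp only [pv, dif_pos h]
  have := (π ⟨i, h⟩).isLt; omega

lemma pv_inj {n : ℕ} (π : Equiv.Perm (Fin n)) {i j : ℕ} (hi : i < n) (hj : j < n)
    (h : pv π i = pv π j) : i = j := by
  simp only [pv, dif_pos hi, dif_pos hj] at h
  have h2 : π ⟨i, hi⟩ = π ⟨j, hj⟩ := Fin.ext (by omega)
  have := π.injective h2
  exact congrArg Fin.val this

lemma pv_surj {n : ℕ} (π : Equiv.Perm (Fin n)) {v : ℕ} (h1 : 1 ≤ v) (h2 : v ≤ n) :
    ∃ i, i < n ∧ pv π i = v := by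
  refine ⟨(π.symm ⟨v - 1, by omega⟩ : ℕ), (π.symm _).isLt, ?_⟩
  simp only [pv, dif_pos (π.symm ⟨v - 1, by omega⟩).isLt]
  rw [Fin.eta, Equiv.apply_symm_apply]
  simp; omega

lemma pv_rotL_lo {n t s i : ℕ} (htn : t ≤ n) (h : i + s < t) :
    pv (rotL n t s) i = i + s + 1 := by
  have hi : i < n := by omega
  simp only [pv, dif_pos hi, rotL, Equiv.coe_fn_mk]
  rw [dif_pos (⟨(by omega : i < t), htn⟩ : ((⟨i, hi⟩ : Fin n) : ℕ) < t ∧ t ≤ n)]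
  simp [Nat.mod_eq_of_lt h]

lemma pv_rotL_mid {n t s i : ℕ} (htn : t ≤ n) (hit : i < t) (h : t ≤ i + s) (hst : s < t) :
    pv (rotL n t s) i = i + s - t + 1 := by
  have hi : i < n := by omega
  simp only [pv, dif_pos hi, rotL, Equiv.coe_fn_mk]
  rw [dif_pos (by exact ⟨hit, htn⟩ : ((⟨i, hi⟩ : Fin n) : ℕ) < t ∧ t ≤ n)]
  have h2 : i + s - t < t := by omega
  have : (i + s) % t = i + s - t := by
    rw [Nat.mod_eq_sub_mod h, Nat.mod_eq_of_lt h2]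
  simp [this]

lemma pv_rotL_hi {n t s i : ℕ} (hti : t ≤ i) (hi : i < n) :
    pv (rotL n t s) i = i + 1 := by
  simp only [pv, dif_pos hi, rotL, Equiv.coe_fn_mk]
  rw [dif_neg (by intro hc; exact absurd hc.1 (by simp; omega))]

lemma pv_one {n : ℕ} {i : ℕ} (h : i < n) : pv (1 : Equiv.Perm (Fin n)) i = i + 1 := by
  simp [pv, h]



lemma permWord_length {n : ℕ} (π : Equiv.Perm (Fin n)) : (permWord π).length = n := by
  simp [permWord]

lemma permWord_getD {n : ℕ} (π : Equiv.Perm (Fin n)) (i : ℕ) :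
    (permWord π).getD i 0 = pv π i := by
  by_cases h : i < n
  · rw [List.getD_eq_getElem _ _ (by simp [permWord_length, h])]
    simp [permWord, pv, h]
  · rw [List.getD_eq_default _ _ (by simp [permWord_length]; omega)]
    simp [pv, h]

lemma permWord_getElem {n : ℕ} (π : Equiv.Perm (Fin n)) (i : ℕ)
    (h : i < (permWord π).length) : (permWord π)[i] = pv π i := by
  rw [← List.getD_eq_getElem _ 0 h, permWord_getD]

lemma permWord_get {n : ℕ} (π : Equiv.Perm (Fin n)) (i : Fin ((permWord π).length)) :
    (permWord π).get i = pv π (i : ℕ) := by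
  rw [List.get_eq_getElem, permWord_getElem]

open Finset in
lemma peaks_eq {n : ℕ} (π : Equiv.Perm (Fin n)) :
    peaks (permWord π) = ((range (n - 2)).filter fun i =>
      pv π i < pv π (i + 1) ∧ pv π (i + 2) < pv π (i + 1)).card := by
  simp only [peaks, permWord_length, permWord_getD]

lemma contains132_iff {n : ℕ} (π : Equiv.Perm (Fin n)) :
    ContainsPat (permWord π) [1,3,2] ↔
      ∃ i j k : ℕ, i < j ∧ j < k ∧ k < n ∧ pv π i < pv π k ∧ pv π k < pv π j := by
  constructor
  · rintro ⟨f, hf, hiff⟩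
    have hlen : (permWord π).length = n := permWord_length π
    refine ⟨f ⟨0, by norm_num⟩, f ⟨1, by norm_num⟩, f ⟨2, by norm_num⟩,
      hf (by exact Fin.mk_lt_mk.mpr (by norm_num)),
      hf (by exact Fin.mk_lt_mk.mpr (by norm_num)), by have := (f (⟨2, by norm_num⟩ : Fin 3)).isLt; omega, ?_, ?_⟩
    · have h := (hiff ⟨0, by norm_num⟩ ⟨2, by norm_num⟩).mp (by norm_num)
      rwa [permWord_get, permWord_get] at h
    · have h := (hiff ⟨2, by norm_num⟩ ⟨1, by norm_num⟩).mp (by norm_num)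
      rwa [permWord_get, permWord_get] at h
  · rintro ⟨i, j, k, hij, hjk, hkn, h1, h2⟩
    have hlen : (permWord π).length = n := permWord_length π
    refine ⟨fun a => if (a : ℕ) = 0 then ⟨i, by omega⟩ else if (a : ℕ) = 1 then ⟨j, by omega⟩
      else ⟨k, by omega⟩, ?_, ?_⟩
    · intro a b hab
      fin_cases a <;> fin_cases b <;> simp_all <;> omega
    · intro a b
      have h3 : pv π i < pv π j := lt_trans h1 h2
      fin_cases a <;> fin_cases b <;>
        simp [permWord_get, permWord_getElem] <;> omega

lemma contains321_iff {n : ℕ} (π : Equiv.Perm (Fin n)) :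
    ContainsPat (permWord π) [3,2,1] ↔
      ∃ i j k : ℕ, i < j ∧ j < k ∧ k < n ∧ pv π k < pv π j ∧ pv π j < pv π i := by
  constructor
  · rintro ⟨f, hf, hiff⟩
    have hlen : (permWord π).length = n := permWord_length π
    refine ⟨f ⟨0, by norm_num⟩, f ⟨1, by norm_num⟩, f ⟨2, by norm_num⟩,
      hf (by exact Fin.mk_lt_mk.mpr (by norm_num)),
      hf (by exact Fin.mk_lt_mk.mpr (by norm_num)), by have := (f (⟨2, by norm_num⟩ : Fin 3)).isLt; omega, ?_, ?_⟩
    · have h := (hiff ⟨2, by norm_num⟩ ⟨1, by norm_num⟩).mp (by norm_num)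
      rwa [permWord_get, permWord_get] at h
    · have h := (hiff ⟨1, by norm_num⟩ ⟨0, by norm_num⟩).mp (by norm_num)
      rwa [permWord_get, permWord_get] at h
  · rintro ⟨i, j, k, hij, hjk, hkn, h1, h2⟩
    have hlen : (permWord π).length = n := permWord_length π
    refine ⟨fun a => if (a : ℕ) = 0 then ⟨i, by omega⟩ else if (a : ℕ) = 1 then ⟨j, by omega⟩
      else ⟨k, by omega⟩, ?_, ?_⟩
    · intro a b hab
      fin_cases a <;> fin_cases b <;> simp_all <;> omega
    · intro a b
      have h3 : pv π k < pv π i := lt_trans h1 h2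
      fin_cases a <;> fin_cases b <;>
        simp [permWord_get, permWord_getElem] <;> omega

lemma avoidsAll_iff {n : ℕ} (π : Equiv.Perm (Fin n)) :
    AvoidsAll (permWord π) [[1,3,2],[3,2,1]] ↔
      (¬ ∃ i j k : ℕ, i < j ∧ j < k ∧ k < n ∧ pv π i < pv π k ∧ pv π k < pv π j) ∧
      (¬ ∃ i j k : ℕ, i < j ∧ j < k ∧ k < n ∧ pv π k < pv π j ∧ pv π j < pv π i) := by
  rw [← contains132_iff, ← contains321_iff]
  constructor
  · intro h; exact ⟨h _ (by simp), h _ (by simp)⟩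
  · rintro ⟨h1, h2⟩ ρ hρ
    simp only [List.mem_cons, List.not_mem_nil, or_false, List.mem_singleton] at hρ
    rcases hρ with rfl | rfl
    · exact h1
    · exact h2



lemma mono_of_adj (f : ℕ → ℕ) (a b : ℕ) (h : ∀ i, a ≤ i → i + 1 ≤ b → f i < f (i+1)) :
    ∀ i j, a ≤ i → i < j → j ≤ b → f i < f j := by
  intro i j hai hij hjb
  induction j with
  | zero => omega
  | succ m ih =>
    rcases Nat.lt_succ_iff_lt_or_eq.mp hij with h' | h'
    · exact lt_trans (ih h' (by omega)) (h m (by omega) (by omega))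
    · subst h'; exact h i hai (by omega)

lemma gap_of_adj (f : ℕ → ℕ) (a b : ℕ) (h : ∀ i, a ≤ i → i + 1 ≤ b → f i < f (i+1)) :
    ∀ i j, a ≤ i → i ≤ j → j ≤ b → f i + (j - i) ≤ f j := by
  intro i j hai hij hjb
  induction j with
  | zero => have : i = 0 := by omega
            subst this; simp
  | succ m ih =>
    rcases Nat.lt_succ_iff_lt_or_eq.mp (Nat.lt_succ_of_le hij) with h' | h'
    · have h1 := ih (by omega) (by omega)
      have h2 := h m (by omega) (by omega)
      omega
    · subst h'; omega


lemma pv_eq {n : ℕ} (σ : Equiv.Perm (Fin n)) (i : ℕ) (hi : i < n) :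
    pv σ i = ((σ ⟨i, hi⟩ : ℕ) + 1) := dif_pos hi

theorem char {n : ℕ} (π : Equiv.Perm (Fin n))
    (h132 : ∀ i j k : ℕ, i < j → j < k → k < n → ¬(pv π i < pv π k ∧ pv π k < pv π j))
    (h321 : ∀ i j k : ℕ, i < j → j < k → k < n → ¬(pv π k < pv π j ∧ pv π j < pv π i)) :
    π = 1 ∨ ∃ s t : ℕ, 1 ≤ s ∧ s < t ∧ t ≤ n ∧ π = rotL n t s := by
  by_cases hdesc : ∃ d, d + 1 < n ∧ pv π (d+1) < pv π d
  · -- descent case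
    right
    obtain ⟨d, hd1, hdlt⟩ := hdesc
    have twoDesc : ∀ p q, p + 1 < n → q + 1 < n → p < q →
        pv π (p+1) < pv π p → pv π (q+1) < pv π q → False := by
      intro p q hp hq hpq hdp hdq
      by_cases hpq1 : p + 1 = q
      · rw [show q + 1 = p + 2 by omega, show q = p + 1 by omega] at hdq
        exact h321 p (p+1) (p+2) (by omega) (by omega) (by omega) ⟨hdq, hdp⟩
      · rcases lt_trichotomy (pv π (p+1)) (pv π (q+1)) with h' | h' | h'
        · exact h132 (p+1) q (q+1) (by omega) (by omega) (by omega) ⟨h', hdq⟩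
        · exact absurd (pv_inj π (by omega) (by omega) h') (by omega)
        · exact h321 p (p+1) (q+1) (by omega) (by omega) (by omega) ⟨h', hdp⟩
    have hasc : ∀ i, i + 1 < n → i ≠ d → pv π i < pv π (i+1) := by
      intro i hi hne
      have hne2 : pv π i ≠ pv π (i+1) := fun h => by
        have := pv_inj π (by omega) hi h; omega
      by_contra hcon
      have hdi : pv π (i+1) < pv π i := by omega
      rcases Nat.lt_or_ge i d with h' | h'
      · exact twoDesc i d hi hd1 h' hdi hdlt
      · exact twoDesc d i hd1 hi (by omega) hdlt hdi
    have mono1 : ∀ i j, i < j → j ≤ d → pv π i < pv π j :=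
      fun i j hij hjd => mono_of_adj (pv π) 0 d
        (fun i _ h2 => hasc i (by omega) (by omega)) i j (Nat.zero_le _) hij hjd
    have gap1 : ∀ i j, i ≤ j → j ≤ d → pv π i + (j - i) ≤ pv π j :=
      fun i j hij hjd => gap_of_adj (pv π) 0 d
        (fun i _ h2 => hasc i (by omega) (by omega)) i j (Nat.zero_le _) hij hjd
    have mono2 : ∀ i j, d + 1 ≤ i → i < j → j < n → pv π i < pv π j :=
      fun i j hdi hij hjn => mono_of_adj (pv π) (d+1) (n-1)
        (fun i h1 h2 => hasc i (by omega) (by omega)) i j hdi hij (by omega)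
    have gap2 : ∀ i j, d + 1 ≤ i → i ≤ j → j < n → pv π i + (j - i) ≤ pv π j :=
      fun i j hdi hij hjn => gap_of_adj (pv π) (d+1) (n-1)
        (fun i h1 h2 => hasc i (by omega) (by omega)) i j hdi hij (by omega)
    have bClaim : ∀ j, d < j → j < n → pv π j < pv π 0 ∨ pv π d < pv π j := by
      intro j hdj hjn
      have hne0 : pv π j ≠ pv π 0 := fun h => by
        have := pv_inj π hjn (by omega) h; omega
      have hned : pv π j ≠ pv π d := fun h => by
        have := pv_inj π hjn (by omega) h; omega
      rcases Nat.eq_zero_or_pos d with rfl | hd0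
      · omega
      · by_contra hcon
        push_neg at hcon
        exact h132 0 d j hd0 hdj hjn ⟨by omega, by omega⟩
    have hgd : pv π 0 + d ≤ pv π d := by
      have := gap1 0 d (by omega) (by omega); omega
    have hdle : pv π d ≤ pv π 0 + d := by
      have hsub : Finset.Icc (pv π 0) (pv π d) ⊆ (Finset.range (d+1)).image (pv π) := by
        intro v hv
        simp only [Finset.mem_Icc] at hv
        have hv1 : 1 ≤ v := le_trans (pv_pos π (by omega)) hv.1
        have hv2 : v ≤ n := le_trans hv.2 (pv_le π (by omega))
        obtain ⟨i, hin, hfi⟩ := pv_surj π hv1 hv2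
        have hile : i ≤ d := by
          by_contra hgt
          rcases bClaim i (by omega) hin with h' | h' <;> omega
        exact Finset.mem_image.mpr ⟨i, Finset.mem_range.mpr (by omega), hfi⟩
      have h1 := Finset.card_le_card hsub
      have h2 := Finset.card_image_le (s := Finset.range (d+1)) (f := pv π)
      rw [Nat.card_Icc] at h1
      rw [Finset.card_range] at h2
      omega
    have hfi1 : ∀ i, i ≤ d → pv π i = pv π 0 + i := by
      intro i hid
      have h1 := gap1 0 i (by omega) hid
      have h2 := gap1 i d hid (le_refl d)
      omega
    have hf0 : 2 ≤ pv π 0 := by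
      by_contra h
      have hp0 := pv_pos π (show 0 < n by omega)
      rcases bClaim (d+1) (by omega) hd1 with h' | h'
      · have := pv_pos π hd1; omega
      · omega
    have htn : pv π d ≤ n := pv_le π (by omega)
    -- value 1 is at position d+1
    have hA : pv π (d+1) = 1 := by
      obtain ⟨i0, hi0n, hi0⟩ := pv_surj π (le_refl 1) (by omega)
      have h1 : ¬ i0 ≤ d := fun hle => by have := hfi1 i0 hle; omega
      have h2 : ¬ d + 1 < i0 := fun hlt => by
        have := mono2 (d+1) i0 (le_refl _) hlt hi0n
        have := pv_pos π hd1; omega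
      have h3 : i0 = d + 1 := by omega
      subst h3
      exact hi0
    have hB : ∀ k, k < pv π 0 - 1 → pv π (d+1+k) = k + 1 := by
      intro k
      induction k using Nat.strong_induction_on with
      | _ k ih =>
        intro hks
        obtain ⟨i, hin, hfi⟩ := pv_surj π (show 1 ≤ k+1 by omega)
          (show k+1 ≤ n by omega)
        have hile : ¬ i ≤ d := fun h => by have := hfi1 i h; omega
        have h1 : d + 1 + k ≤ i := by
          by_contra h
          have hk' : i - (d+1) < k := by omega
          have h2 := ih (i - (d+1)) hk' (by omega)
          rw [show d+1+(i-(d+1)) = i by omega] at h2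
          omega
        rcases eq_or_lt_of_le h1 with he | hlt
        · rw [he]; exact hfi
        · have hdn : d+1+k < n := by omega
          have hlt2 : pv π (d+1+k) < pv π i := mono2 (d+1+k) i (by omega) hlt hin
          have hpos := pv_pos π hdn
          have hk'' : pv π (d+1+k) - 1 < k := by omega
          have h3 := ih (pv π (d+1+k) - 1) hk'' (by omega)
          have h4 := pv_inj π (show d+1+(pv π (d+1+k) - 1) < n by omega) hdn
            (by omega : pv π (d+1+(pv π (d+1+k) - 1)) = pv π (d+1+k))
          omega
    have hlow : ∀ i, pv π d ≤ i → i < n → pv π d + 1 ≤ pv π i := by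
      intro i hti hin
      have hp := pv_pos π hin
      by_contra h
      rcases le_or_gt (pv π i) (pv π 0 - 1) with hle | hgt
      · have h3 := hB (pv π i - 1) (by omega)
        have h4 := pv_inj π (show d+1+(pv π i - 1) < n by omega) hin
          (by omega : pv π (d+1+(pv π i - 1)) = pv π i)
        omega
      · have h3 := hfi1 (pv π i - pv π 0) (by omega)
        have h4 := pv_inj π (show pv π i - pv π 0 < n by omega) hin
          (by omega : pv π (pv π i - pv π 0) = pv π i)
        omega
    have hgap2' : ∀ i, pv π d ≤ i → i < n → i + 1 ≤ pv π i := by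
      intro i hti hin
      have h1 := gap2 (pv π d) i (by omega) hti hin
      have h2 := hlow (pv π d) (le_refl _) (by omega)
      omega
    have hC : ∀ m, ∀ i, pv π d ≤ i → i < n → n - 1 - i = m → pv π i = i + 1 := by
      intro m
      induction m with
      | zero =>
        intro i hti hin him
        have := pv_le π hin
        have := hgap2' i hti hin
        omega
      | succ m ih =>
        intro i hti hin him
        have h1 : pv π i < pv π (i+1) := hasc i (by omega) (by omega)
        have h2 := ih (i+1) (by omega) (by omega) (by omega)
        have h3 := hgap2' i hti hin
        omega
    refine ⟨pv π 0 - 1, pv π d, by omega, by omega, htn, ?_⟩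
    have hall : ∀ i, i < n → pv π i = pv (rotL n (pv π d) (pv π 0 - 1)) i := by
      intro i hi
      rcases Nat.lt_or_ge i (d+1) with h' | h'
      · rw [pv_rotL_lo htn (by omega)]
        have := hfi1 i (by omega); omega
      · rcases Nat.lt_or_ge i (pv π d) with h'' | h''
        · rw [pv_rotL_mid htn h'' (by omega) (by omega)]
          have h3 := hB (i - (d+1)) (by omega)
          rw [show d+1+(i-(d+1)) = i by omega] at h3
          omega
        · rw [pv_rotL_hi h'' hi]
          exact hC (n-1-i) i h'' hi rfl
    refine Equiv.ext fun x => Fin.ext ?_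
    have h := hall x.val x.isLt
    rw [pv_eq π _ x.isLt, pv_eq _ _ x.isLt] at h
    have h2 : (π x : ℕ) + 1 = ((rotL n (pv π d) (pv π 0 - 1)) x : ℕ) + 1 := by
      simpa using h
    omega
  · -- no descent: identity
    left
    push_neg at hdesc
    have hasc : ∀ i, i + 1 < n → pv π i < pv π (i+1) := by
      intro i hi
      have hne : pv π i ≠ pv π (i+1) := fun h => by
        have := pv_inj π (by omega) hi h; omega
      have := hdesc i hi
      omega
    have hup : ∀ i, i < n → i + 1 ≤ pv π i := by
      intro i
      induction i with
      | zero => intro hi; exact pv_pos π hi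
      | succ m ih =>
        intro hi
        have h1 := hasc m hi
        have h2 := ih (by omega)
        omega
    have hdown : ∀ m, ∀ i, i < n → n - 1 - i = m → pv π i ≤ i + 1 := by
      intro m
      induction m with
      | zero =>
        intro i hi him
        have := pv_le π hi; omega
      | succ m ih =>
        intro i hi him
        have h1 := hasc i (by omega)
        have h2 := ih (i+1) (by omega) (by omega)
        omega
    refine Equiv.ext fun x => Fin.ext ?_
    have h1 := hup x.val x.isLt
    have h2 := hdown (n-1-x.val) x.val x.isLt rfl
    rw [pv_eq π _ x.isLt] at h1 h2
    have h3 : (π x : ℕ) + 1 = x.val + 1 := by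
      have hx : (⟨x.val, x.isLt⟩ : Fin n) = x := Fin.eta x x.isLt
      rw [hx] at h1 h2
      omega
    simpa using h3


lemma rotL_inv_block {n t s : ℕ} (hs : 1 ≤ s) (hst : s < t) (htn : t ≤ n) :
    ∀ i j, i < j → j < n → pv (rotL n t s) j < pv (rotL n t s) i →
      i + s < t ∧ t ≤ j + s ∧ j < t := by
  intro i j hij hjn hlt
  have hi : i < n := by omega
  by_cases h1 : i + s < t
  · by_cases h2 : j + s < t
    · rw [pv_rotL_lo htn h1, pv_rotL_lo htn h2] at hlt; omega
    · by_cases h3 : j < t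
      · exact ⟨h1, by omega, h3⟩
      · rw [pv_rotL_lo htn h1, pv_rotL_hi (by omega) hjn] at hlt; omega
  · by_cases h4 : i < t
    · rw [pv_rotL_mid htn h4 (by omega) hst] at hlt
      by_cases h2 : j + s < t
      · omega
      · by_cases h3 : j < t
        · rw [pv_rotL_mid htn h3 (by omega) hst] at hlt; omega
        · rw [pv_rotL_hi (by omega) hjn] at hlt; omega
    · rw [pv_rotL_hi (by omega : t ≤ i) hi, pv_rotL_hi (by omega : t ≤ j) hjn] at hlt
      omega

lemma rotL_avoids {n t s : ℕ} (hs : 1 ≤ s) (hst : s < t) (htn : t ≤ n) :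
    AvoidsAll (permWord (rotL n t s)) [[1,3,2],[3,2,1]] := by
  rw [avoidsAll_iff]
  constructor
  · rintro ⟨i, j, k, hij, hjk, hkn, hik, hkj⟩
    obtain ⟨hj1, hk2, hk3⟩ := rotL_inv_block hs hst htn j k hjk hkn hkj
    rw [pv_rotL_lo htn (by omega), pv_rotL_mid htn hk3 hk2 hst] at hik
    omega
  · rintro ⟨i, j, k, hij, hjk, hkn, hkj, hji⟩
    obtain ⟨hi1, hj2, hj3⟩ := rotL_inv_block hs hst htn i j hij (by omega) hji
    obtain ⟨hj1', -, -⟩ := rotL_inv_block hs hst htn j k hjk hkn hkj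
    omega

lemma peaks_rotL {n t s : ℕ} (hs : 1 ≤ s) (hst : s < t) (htn : t ≤ n) :
    peaks (permWord (rotL n t s)) = if s + 2 ≤ t then 1 else 0 := by
  rw [peaks_eq]
  have hset : ((Finset.range (n-2)).filter (fun i => pv (rotL n t s) i < pv (rotL n t s) (i+1) ∧
      pv (rotL n t s) (i+2) < pv (rotL n t s) (i+1)))
      = if s + 2 ≤ t then {t - s - 2} else ∅ := by
    ext i
    simp only [Finset.mem_filter, Finset.mem_range]
    split_ifs with hcase
    · simp only [Finset.mem_singleton]
      constructor
      · rintro ⟨hi, hasc, hdesc⟩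
        have hb := rotL_inv_block hs hst htn (i+1) (i+2) (by omega) (by omega) hdesc
        omega
      · rintro rfl
        refine ⟨by omega, ?_, ?_⟩
        · rw [pv_rotL_lo htn (by omega), pv_rotL_lo htn (by omega)]; omega
        · rw [pv_rotL_mid htn (by omega) (by omega) hst, pv_rotL_lo htn (by omega)]
          omega
    · simp only [Finset.notMem_empty, iff_false]
      rintro ⟨hi, hasc, hdesc⟩
      have hb := rotL_inv_block hs hst htn (i+1) (i+2) (by omega) (by omega) hdesc
      omega
  rw [hset]
  split_ifs <;> simp

lemma peaks_one {n : ℕ} : peaks (permWord (1 : Equiv.Perm (Fin n))) = 0 := by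
  rw [peaks_eq]
  apply Finset.card_eq_zero.mpr
  apply Finset.filter_eq_empty_iff.mpr
  intro i hi
  rw [Finset.mem_range] at hi
  rw [pv_one (by omega), pv_one (by omega), pv_one (by omega)]
  omega

lemma one_avoids {n : ℕ} : AvoidsAll (permWord (1 : Equiv.Perm (Fin n))) [[1,3,2],[3,2,1]] := by
  rw [avoidsAll_iff]
  constructor
  · rintro ⟨i, j, k, hij, hjk, hkn, h1, h2⟩
    rw [pv_one (by omega), pv_one (by omega)] at h1
    rw [pv_one (by omega), pv_one (by omega)] at h2
    omega
  · rintro ⟨i, j, k, hij, hjk, hkn, h1, h2⟩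
    rw [pv_one (by omega), pv_one (by omega)] at h1
    rw [pv_one (by omega), pv_one (by omega)] at h2
    omega

lemma sum_aux (n : ℕ) : (∑ t ∈ Finset.Icc 1 n, (t - 2)) = Nat.choose (n-1) 2 := by
  induction n with
  | zero => simp
  | succ m ih =>
    rw [Finset.sum_Icc_succ_top (by omega : 1 ≤ m + 1), ih]
    rcases m with _ | m'
    · simp
    · simp only [show m' + 1 - 1 = m' from rfl, show m' + 1 + 1 - 1 = m' + 1 from rfl,
        show m' + 1 + 1 - 2 = m' from rfl]
      have h := Nat.choose_succ_succ m' 1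
      rw [Nat.choose_one_right] at h
      have h2 : (m' + 1).choose 2 = m' + m'.choose 2 := h
      omega

end Stmt19Aux

open Stmt19Aux

theorem stmt19 (n : ℕ) (hn : 1 ≤ n) :
    acount n 0 peaks [[1,3,2],[3,2,1]] = n ∧
    acount n 1 peaks [[1,3,2],[3,2,1]] = Nat.choose (n - 1) 2 ∧
    ∀ k, 2 ≤ k → acount n k peaks [[1,3,2],[3,2,1]] = 0 := by
  refine ⟨?_, ?_, ?_⟩
  · -- zero peaks
    unfold acount
    conv_rhs => rw [← Finset.card_range n]
    refine (Finset.card_bij (fun j _ => if j = 0 then (1 : Equiv.Perm (Fin n))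
      else rotL n (j+1) j) ?_ ?_ ?_).symm
    · intro j hj
      rw [Finset.mem_range] at hj
      rcases Nat.eq_zero_or_pos j with rfl | hj1
      · rw [if_pos rfl]
        exact Finset.mem_filter.mpr ⟨Finset.mem_univ _, one_avoids, peaks_one⟩
      · rw [if_neg (by omega)]
        refine Finset.mem_filter.mpr ⟨Finset.mem_univ _,
          rotL_avoids hj1 (by omega) (by omega), ?_⟩
        rw [peaks_rotL hj1 (by omega) (by omega), if_neg (by omega)]
    · intro a1 ha1 a2 ha2 heq
      rw [Finset.mem_range] at ha1 ha2
      have e1 : pv (if a1 = 0 then (1:Equiv.Perm (Fin n)) else rotL n (a1+1) a1) 0 = a1 + 1 := by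
        rcases Nat.eq_zero_or_pos a1 with rfl | h
        · rw [if_pos rfl, pv_one (by omega)]
        · rw [if_neg (by omega), pv_rotL_lo (by omega) (by omega)]; omega
      have e2 : pv (if a2 = 0 then (1:Equiv.Perm (Fin n)) else rotL n (a2+1) a2) 0 = a2 + 1 := by
        rcases Nat.eq_zero_or_pos a2 with rfl | h
        · rw [if_pos rfl, pv_one (by omega)]
        · rw [if_neg (by omega), pv_rotL_lo (by omega) (by omega)]; omega
      rw [heq] at e1
      omega
    · intro π hπ
      rw [Finset.mem_filter] at hπ
      obtain ⟨-, hav, hpk⟩ := hπ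
      rw [avoidsAll_iff] at hav
      rcases char π (fun i j k hij hjk hkn h => hav.1 ⟨i,j,k,hij,hjk,hkn,h.1,h.2⟩)
        (fun i j k hij hjk hkn h => hav.2 ⟨i,j,k,hij,hjk,hkn,h.1,h.2⟩)
        with rfl | ⟨s, t, hs, hst, htn, rfl⟩
      · exact ⟨0, Finset.mem_range.mpr (by omega), by rw [if_pos rfl]⟩
      · rw [peaks_rotL hs hst htn] at hpk
        have ht : t = s + 1 := by split_ifs at hpk <;> omega
        refine ⟨s, Finset.mem_range.mpr (by omega), ?_⟩
        rw [if_neg (by omega), ht]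
  · -- one peak
    unfold acount
    have hq : ((Finset.Icc 1 n).sigma (fun t => Finset.Icc 1 (t-2))).card
        = (n-1).choose 2 := by
      rw [Finset.card_sigma]
      rw [Finset.sum_congr rfl (fun t _ => by rw [Nat.card_Icc]; omega :
        ∀ t ∈ Finset.Icc 1 n, (Finset.Icc 1 (t-2)).card = t - 2)]
      exact sum_aux n
    rw [← hq]
    refine (Finset.card_bij (fun p _ => rotL n p.1 p.2) ?_ ?_ ?_).symm
    · rintro ⟨t, s⟩ hp
      dsimp only
      simp only [Finset.mem_sigma, Finset.mem_Icc] at hp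
      refine Finset.mem_filter.mpr ⟨Finset.mem_univ _,
        rotL_avoids (by omega) (by omega) (by omega), ?_⟩
      rw [peaks_rotL (by omega) (by omega) (by omega), if_pos (by omega)]
    · rintro ⟨t1, s1⟩ hp1 ⟨t2, s2⟩ hp2 heq
      dsimp only at heq
      simp only [Finset.mem_sigma, Finset.mem_Icc] at hp1 hp2
      have k1 : pv (rotL n t1 s1) 0 = s1 + 1 := by
        rw [pv_rotL_lo (by omega) (by omega)]; omega
      have k2 : pv (rotL n t1 s1) (t1 - s1) = 1 := by
        rw [pv_rotL_mid (by omega) (by omega) (by omega) (by omega)]; omega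
      have k1' : pv (rotL n t2 s2) 0 = s2 + 1 := by
        rw [pv_rotL_lo (by omega) (by omega)]; omega
      have k2' : pv (rotL n t2 s2) (t2 - s2) = 1 := by
        rw [pv_rotL_mid (by omega) (by omega) (by omega) (by omega)]; omega
      rw [heq] at k1 k2
      have hs12 : s1 = s2 := by omega
      have hteq : pv (rotL n t2 s2) (t1 - s1) = pv (rotL n t2 s2) (t2 - s2) := by
        rw [k2, k2']
      have ht12 : t1 - s1 = t2 - s2 := by exact pv_inj _ (by omega) (by omega) hteq
      have ht : t1 = t2 := by omega
      subst hs12; subst ht; rfl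
    · intro π hπ
      rw [Finset.mem_filter] at hπ
      obtain ⟨-, hav, hpk⟩ := hπ
      rw [avoidsAll_iff] at hav
      rcases char π (fun i j k hij hjk hkn h => hav.1 ⟨i,j,k,hij,hjk,hkn,h.1,h.2⟩)
        (fun i j k hij hjk hkn h => hav.2 ⟨i,j,k,hij,hjk,hkn,h.1,h.2⟩)
        with rfl | ⟨s, t, hs, hst, htn, rfl⟩
      · rw [peaks_one] at hpk; omega
      · rw [peaks_rotL hs hst htn] at hpk
        have hst2 : s + 2 ≤ t := by split_ifs at hpk <;> omega
        exact ⟨⟨t, s⟩, by simp only [Finset.mem_sigma, Finset.mem_Icc]; omega, rfl⟩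
  · -- no more peaks
    intro k hk
    unfold acount
    apply Finset.card_eq_zero.mpr
    apply Finset.filter_eq_empty_iff.mpr
    intro π _
    rintro ⟨hav, hpk⟩
    rw [avoidsAll_iff] at hav
    rcases char π (fun i j k hij hjk hkn h => hav.1 ⟨i,j,k,hij,hjk,hkn,h.1,h.2⟩)
      (fun i j k hij hjk hkn h => hav.2 ⟨i,j,k,hij,hjk,hkn,h.1,h.2⟩)
      with rfl | ⟨s, t, hs, hst, htn, rfl⟩
    · rw [peaks_one] at hpk; omega
    · rw [peaks_rotL hs hst htn] at hpk
      split_ifs at hpk <;> omega
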